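/- arXiv:1301.4396 — 2 statements merged into one kernel-verified Lean document; each statement's English description precedes it below -/
import Mathlib

section
/- Let a, b > 0. Then limsup_{λ→∞} ( card{(m,n) ∈ ℤ_{≥0} × ℤ_{≥0} : m²π²/(4a²) + n²π²/(4b²) ≤ λ} − (ab/π)λ − (2(a+b)/π)√λ ) / √λ ≤ 0; that is, the number of such lattice points is at most (ab/π)λ + (2a/π)√λ + (2b/π)√λ + o(√λ) as λ → ∞. -/
open Filter Real

lemma quarter_circle_integral : ∫ x in (0:ℝ)..1, Real.sqrt (1 - x ^ 2) = π / 4 := by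
  have h : ∫ x in (-1:ℝ)..1, Real.sqrt (1 - x ^ 2) = π / 2 := integral_sqrt_one_sub_sq
  have hcont : Continuous fun x : ℝ => Real.sqrt (1 - x ^ 2) := by
    exact (continuous_const.sub (continuous_pow 2)).sqrt
  have hsplit : (∫ x in (-1:ℝ)..0, Real.sqrt (1 - x ^ 2))
      + ∫ x in (0:ℝ)..1, Real.sqrt (1 - x ^ 2) = π / 2 := by
    rw [intervalIntegral.integral_add_adjacent_intervals
      (hcont.intervalIntegrable _ _) (hcont.intervalIntegrable _ _), h]
  have heq : (∫ x in (-1:ℝ)..0, Real.sqrt (1 - x ^ 2))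
      = ∫ x in (0:ℝ)..1, Real.sqrt (1 - x ^ 2) := by
    have h2 := intervalIntegral.integral_comp_neg (a := (0:ℝ)) (b := 1)
      (fun x => Real.sqrt (1 - x ^ 2))
    simp only [neg_sq, neg_zero] at h2
    exact h2.symm
  linarith

lemma scaled_quarter_circle_integral {A : ℝ} (hA : 0 < A) :
    ∫ x in (0:ℝ)..A, Real.sqrt (1 - (x / A) ^ 2) = A * (π / 4) := by
  have := intervalIntegral.integral_comp_div (a := (0:ℝ)) (b := A)
    (c := A) (f := fun x => Real.sqrt (1 - x ^ 2)) hA.ne'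
  rw [this, zero_div, div_self hA.ne', quarter_circle_integral, smul_eq_mul]

/-- Upper bound for counting lattice points `(m,n)`, `m,n ≥ 0`, with
`m²π²/(4a²) + n²π²/(4b²) ≤ λ`: the count is at most
`(ab/π)λ + (2a/π)√λ + (2b/π)√λ + o(√λ)` as `λ → ∞`. -/
theorem lattice_count_neumann_square_upper (a b : ℝ) (ha : 0 < a) (hb : 0 < b) :
    ∀ ε > 0, ∀ᶠ (lam : ℝ) in atTop,
      ((Nat.card {p : ℕ × ℕ |
          (p.1 : ℝ) ^ 2 * π ^ 2 / (4 * a ^ 2)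
            + (p.2 : ℝ) ^ 2 * π ^ 2 / (4 * b ^ 2) ≤ lam} : ℝ))
        ≤ a * b / π * lam + 2 * a / π * Real.sqrt lam + 2 * b / π * Real.sqrt lam
            + ε * Real.sqrt lam := by
  intro ε hε
  have hπ : (0:ℝ) < π := Real.pi_pos
  filter_upwards [eventually_ge_atTop (max 1 ((1/ε)^2))] with lam hlam
  have hlam1 : (1:ℝ) ≤ lam := le_trans (le_max_left _ _) hlam
  have hlam0 : (0:ℝ) < lam := lt_of_lt_of_le one_pos hlam1
  set s := Real.sqrt lam with hs_def
  have hs0 : 0 < s := Real.sqrt_pos.mpr hlam0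
  have hs2 : s ^ 2 = lam := Real.sq_sqrt hlam0.le
  set A := 2 * a * s / π with hA_def
  set B := 2 * b * s / π with hB_def
  have hA0 : 0 < A := by positivity
  have hB0 : 0 < B := by positivity
  have hA2 : A ^ 2 = 4 * a ^ 2 * lam / π ^ 2 := by
    rw [hA_def, ← hs2]; ring
  have hB2 : B ^ 2 = 4 * b ^ 2 * lam / π ^ 2 := by
    rw [hB_def, ← hs2]; ring
  set g : ℝ → ℝ := fun x => B * Real.sqrt (1 - (x / A) ^ 2) with hg_def
  have hg_nonneg : ∀ x, 0 ≤ g x := fun x => by positivity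
  set N := ⌊A⌋₊ with hN_def
  set S : Set (ℕ × ℕ) := {p : ℕ × ℕ |
      (p.1 : ℝ) ^ 2 * π ^ 2 / (4 * a ^ 2)
        + (p.2 : ℝ) ^ 2 * π ^ 2 / (4 * b ^ 2) ≤ lam} with hS_def
  set U : Finset (ℕ × ℕ) :=
    (Finset.range (N + 1)).biUnion
      (fun m => {m} ×ˢ Finset.range (⌊g m⌋₊ + 1)) with hU_def
  -- membership facts
  have hkey : ∀ p : ℕ × ℕ, p ∈ S →
      ((p.2 : ℝ) / B) ^ 2 + ((p.1 : ℝ) / A) ^ 2 ≤ 1 := by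
    intro p hp
    have hcond : (p.1 : ℝ) ^ 2 * π ^ 2 / (4 * a ^ 2)
        + (p.2 : ℝ) ^ 2 * π ^ 2 / (4 * b ^ 2) ≤ lam := hp
    have hbne := hb.ne'
    have hane := ha.ne'
    have hπne := hπ.ne'
    have hsne := hs0.ne'
    have e1 : ((p.2:ℝ)/B)^2 = (p.2:ℝ)^2 * π^2/(4*b^2) / lam := by
      rw [hB_def, ← hs2]; field_simp; ring
    have e2 : ((p.1:ℝ)/A)^2 = (p.1:ℝ)^2 * π^2/(4*a^2) / lam := by
      rw [hA_def, ← hs2]; field_simp; ring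
    rw [e1, e2, ← add_div, div_le_one hlam0]
    linarith
  have hsub : S ⊆ ↑U := by
    intro p hp
    have hk := hkey p hp
    have h1 : ((p.1 : ℝ) / A) ^ 2 ≤ 1 := by nlinarith [sq_nonneg ((p.2:ℝ)/B)]
    have hmA : (p.1 : ℝ) ≤ A := by
      have h2 : (p.1 : ℝ) / A ≤ 1 := by
        nlinarith [div_nonneg (Nat.cast_nonneg p.1) hA0.le]
      exact (div_le_one hA0).mp h2
    have hnm : (p.2 : ℝ) ≤ g p.1 := by
      have h3 : ((p.2 : ℝ) / B) ≤ Real.sqrt (1 - ((p.1:ℝ) / A) ^ 2) := by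
        rw [Real.le_sqrt (by positivity) (by nlinarith [sq_nonneg ((p.2:ℝ)/B)])]
        linarith
      calc (p.2 : ℝ) = B * ((p.2:ℝ)/B) := by field_simp
        _ ≤ B * Real.sqrt (1 - ((p.1:ℝ) / A) ^ 2) :=
            mul_le_mul_of_nonneg_left h3 hB0.le
        _ = g p.1 := rfl
    simp only [hU_def, Finset.coe_biUnion, Set.mem_iUnion, Finset.mem_coe,
      Finset.mem_range, Finset.mem_product, Finset.mem_singleton]
    exact ⟨p.1, Nat.lt_succ_of_le (Nat.le_floor hmA),
      ⟨rfl, Nat.lt_succ_of_le (Nat.le_floor hnm)⟩⟩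
  -- cardinality bound
  have hcard : (Nat.card S : ℝ) ≤ ∑ m ∈ Finset.range (N + 1), (g m + 1) := by
    have h1 : Nat.card S ≤ U.card := by
      rw [Nat.card_coe_set_eq, ← Set.ncard_coe_finset U]
      exact Set.ncard_le_ncard hsub (U.finite_toSet)
    have h2 : U.card ≤ ∑ m ∈ Finset.range (N + 1), (⌊g m⌋₊ + 1) := by
      refine le_trans (Finset.card_biUnion_le) (Finset.sum_le_sum fun m _ => ?_)
      rw [Finset.card_product, Finset.card_singleton, Finset.card_range, one_mul]
    calc (Nat.card S : ℝ) ≤ (∑ m ∈ Finset.range (N + 1), (⌊g m⌋₊ + 1) : ℕ) := by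
          exact_mod_cast le_trans h1 h2
      _ = ∑ m ∈ Finset.range (N + 1), ((⌊g m⌋₊ : ℝ) + 1) := by push_cast; ring
      _ ≤ ∑ m ∈ Finset.range (N + 1), (g m + 1) := by
          refine Finset.sum_le_sum fun m _ => ?_
          have := Nat.floor_le (hg_nonneg m); linarith
  -- sum-integral comparison
  have hanti : AntitoneOn g (Set.Icc (0:ℝ) ((0:ℝ) + N)) := by
    intro x hx y hy hxy
    apply mul_le_mul_of_nonneg_left _ hB0.le
    apply Real.sqrt_le_sqrt
    have : (x / A) ^ 2 ≤ (y / A) ^ 2 := by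
      apply pow_le_pow_left₀ (div_nonneg hx.1 hA0.le)
      exact div_le_div_of_nonneg_right hxy hA0.le
    linarith
  have hcontg : Continuous g := by
    apply continuous_const.mul
    exact (continuous_const.sub ((continuous_id.div_const A).pow 2)).sqrt
  have hsumint : ∑ i ∈ Finset.range N, g ((0:ℝ) + (i + 1 : ℕ))
      ≤ ∫ x in (0:ℝ)..((0:ℝ) + N), g x := hanti.sum_le_integral
  have hintle : (∫ x in (0:ℝ)..((0:ℝ) + N), g x) ≤ ∫ x in (0:ℝ)..A, g x := by
    apply intervalIntegral.integral_mono_interval (le_refl (0:ℝ))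
      (by positivity) (by rw [zero_add]; exact Nat.floor_le hA0.le)
    · filter_upwards with x using hg_nonneg x
    · exact hcontg.intervalIntegrable _ _
  have hintval : (∫ x in (0:ℝ)..A, g x) = a * b / π * lam := by
    rw [hg_def]
    rw [intervalIntegral.integral_const_mul]
    rw [scaled_quarter_circle_integral hA0]
    rw [hA_def, hB_def, ← hs2]
    field_simp
    ring
  -- assemble
  have hsum : ∑ m ∈ Finset.range (N + 1), (g m + 1)
      ≤ a * b / π * lam + B + (A + 1) := by
    rw [Finset.sum_add_distrib, Finset.sum_const, Finset.card_range, nsmul_eq_mul,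
      mul_one]
    have hsplit : ∑ m ∈ Finset.range (N + 1), g (m : ℝ)
        = (∑ i ∈ Finset.range N, g ((i + 1 : ℕ) : ℝ)) + g 0 := by
      have := Finset.sum_range_succ' (fun m : ℕ => g m) N
      push_cast at this ⊢
      simpa using this
    have hg0 : g 0 = B := by
      simp [hg_def]
    have hNA : ((N:ℝ) + 1) ≤ A + 1 := by
      have := Nat.floor_le hA0.le
      simpa [hN_def] using add_le_add_right this 1
    have h4 : (∑ i ∈ Finset.range N, g ((i + 1 : ℕ) : ℝ)) ≤ a * b / π * lam := by
      calc (∑ i ∈ Finset.range N, g ((i + 1 : ℕ) : ℝ))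
          = ∑ i ∈ Finset.range N, g ((0:ℝ) + (i + 1 : ℕ)) := by simp
        _ ≤ ∫ x in (0:ℝ)..((0:ℝ) + N), g x := hsumint
        _ ≤ ∫ x in (0:ℝ)..A, g x := hintle
        _ = a * b / π * lam := hintval
    push_cast
    linarith
  have hone : (1:ℝ) ≤ ε * s := by
    have h5 : (1/ε)^2 ≤ lam := le_trans (le_max_right _ _) hlam
    have h6 : 1/ε ≤ s := by
      rw [hs_def, show (1/ε) = Real.sqrt ((1/ε)^2) by
        rw [Real.sqrt_sq (by positivity)]]
      exact Real.sqrt_le_sqrt h5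
    calc (1:ℝ) = ε * (1/ε) := by field_simp
      _ ≤ ε * s := mul_le_mul_of_nonneg_left h6 hε.le
  have hAeq : A = 2 * a / π * s := by rw [hA_def]; ring
  have hBeq : B = 2 * b / π * s := by rw [hB_def]; ring
  calc ((Nat.card S : ℕ) : ℝ) ≤ ∑ m ∈ Finset.range (N + 1), (g m + 1) := hcard
    _ ≤ a * b / π * lam + B + (A + 1) := hsum
    _ ≤ a * b / π * lam + B + (A + ε * s) := by linarith
    _ = a * b / π * lam + 2 * a / π * s + 2 * b / π * s + ε * s := by
        rw [hAeq, hBeq]; ring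
end

section
/- Let 0 < δ < h and let U = {(x,y) ∈ ℝ² : x > 0, y < δ/2}. On U define t₀(x,y) = (δ/2 − y)/x + √( ((δ/2 − y)/x)² + 1 ), σ(x,y) = ((h−δ)/4)( t₀√(t₀² + 1) + arsinh(t₀) − √2 − arsinh(1) ), and s(x,y) = −((t₀² + 1)/(2 t₀)) ( x − ((h−δ)/2) t₀ ). Then the map (x,y) ↦ (σ(x,y), s(x,y)) is differentiable on U and the absolute value of its Jacobian determinant equals √2 (h − δ) ( (δ − 2y)² + 4x² )^{1/4} / ( √((δ − 2y)² + 4x²) − δ + 2y )^{3/2} at every point of U. -/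
/-- The skeleton coordinates `(σ, s)` associated to a parabolic edge of the skeleton of a
Rooms and Passages domain with room side `h` and passage height `δ`:
`σ` is arc length along the parabola measured from the point with `x = (h−δ)/2` and `s`
is the signed distance to the projection on the parabola along the ray from `(0, δ/2)`. -/
noncomputable def skeletonCoords (h δ : ℝ) : ℝ × ℝ → ℝ × ℝ := fun q =>
  let t₀ := (δ / 2 - q.2) / q.1 + Real.sqrt (((δ / 2 - q.2) / q.1) ^ 2 + 1)
  (((h - δ) / 4) * (t₀ * Real.sqrt (t₀ ^ 2 + 1) + Real.arsinh t₀
      - Real.sqrt 2 - Real.arsinh 1),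
   -((t₀ ^ 2 + 1) / (2 * t₀)) * (q.1 - (h - δ) / 2 * t₀))



lemma skeleton_alg (h δ x y : ℝ) (hh : δ < h) (hx : 0 < x) (hy : y < δ / 2) :
    (h - δ) / 2 * ((δ/2 - y)/x + Real.sqrt (((δ/2 - y)/x)^2 + 1))
      * Real.sqrt (((δ/2 - y)/x + Real.sqrt (((δ/2 - y)/x)^2 + 1))^2 + 1) / x
    = Real.sqrt 2 * (h - δ) * ((δ - 2*y)^2 + 4*x^2) ^ ((1:ℝ)/4)
        / (Real.sqrt ((δ - 2*y)^2 + 4*x^2) - δ + 2*y) ^ ((3:ℝ)/2) := by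
  have hx0 : x ≠ 0 := hx.ne'
  have hhδ : (0:ℝ) < h - δ := by linarith
  set d : ℝ := δ - 2*y with hd
  have hd0 : 0 < d := by simp [hd]; linarith
  set X : ℝ := d^2 + 4*x^2 with hX
  have hX0 : 0 < X := by positivity
  set A : ℝ := Real.sqrt X with hA
  have hA2 : A^2 = X := Real.sq_sqrt hX0.le
  have hA0 : 0 < A := Real.sqrt_pos.mpr hX0
  have hAd : d < A := by nlinarith
  have hu : (δ/2 - y)/x = d/(2*x) := by rw [hd]; ring
  have hr : Real.sqrt ((d/(2*x))^2 + 1) = A/(2*x) := by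
    have : (d/(2*x))^2 + 1 = (A/(2*x))^2 := by field_simp; linarith [hA2]
    rw [this, Real.sqrt_sq (by positivity)]
  rw [hu, hr]
  have ht : d/(2*x) + A/(2*x) = (d+A)/(2*x) := by ring
  rw [ht]
  have hDen : Real.sqrt X - δ + 2*y = A - d := by rw [hd]; ring
  rw [hDen]
  have hρ : ((d+A)/(2*x))^2 + 1 = A*(A+d)/(2*x^2) := by field_simp; nlinarith [hA2]
  rw [hρ]
  have hL : 0 ≤ (h - δ)/2 * ((d+A)/(2*x)) * Real.sqrt (A*(A+d)/(2*x^2)) / x :=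
    div_nonneg (mul_nonneg (mul_nonneg (by linarith) (by positivity))
      (Real.sqrt_nonneg _)) hx.le
  have hR : 0 ≤ Real.sqrt 2 * (h - δ) * X ^ ((1:ℝ)/4) / (A - d) ^ ((3:ℝ)/2) :=
    div_nonneg (mul_nonneg (mul_nonneg (Real.sqrt_nonneg 2) hhδ.le)
      (Real.rpow_nonneg hX0.le _)) (Real.rpow_nonneg (by linarith) _)
  rw [← sq_eq_sq₀ hL hR]
  have e1 : (Real.sqrt (A*(A+d)/(2*x^2)))^2 = A*(A+d)/(2*x^2) :=
    Real.sq_sqrt (by positivity)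
  have e2 : (X ^ ((1:ℝ)/4))^2 = A := by
    rw [← Real.rpow_natCast (X ^ ((1:ℝ)/4)) 2, ← Real.rpow_mul hX0.le]
    norm_num
    rw [hA, Real.sqrt_eq_rpow]
  have e3 : ((A - d) ^ ((3:ℝ)/2))^2 = (A - d)^3 := by
    rw [← Real.rpow_natCast ((A-d) ^ ((3:ℝ)/2)) 2, ← Real.rpow_mul (by linarith)]
    norm_num
  rw [div_pow, div_pow, mul_pow, mul_pow, mul_pow, mul_pow, e1, e2, e3]
  have hsq2 : (Real.sqrt 2)^2 = 2 := Real.sq_sqrt (by norm_num)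
  rw [hsq2]
  have key : (A - d)^3 * (A + d)^3 = 64 * x^6 := by
    have h4 : (A - d) * (A + d) = 4*x^2 := by linear_combination hA2
    calc (A - d)^3 * (A + d)^3 = ((A - d)*(A + d))^3 := by ring
    _ = 64 * x^6 := by rw [h4]; ring
  have hAd0 : (A - d) ≠ 0 := sub_ne_zero.mpr hAd.ne'
  field_simp
  linear_combination key

lemma det_clm_eval (L : (ℝ×ℝ) →L[ℝ] (ℝ×ℝ)) :
    LinearMap.det (L.toLinearMap) = (L (1,0)).1 * (L (0,1)).2 - (L (0,1)).1 * (L (1,0)).2 := by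
  rw [← LinearMap.det_toMatrix (Module.Basis.finTwoProd ℝ), Matrix.det_fin_two]
  simp [LinearMap.toMatrix_apply, Module.Basis.finTwoProd_zero, Module.Basis.finTwoProd_one,
    Module.Basis.coe_finTwoProd_repr]

/-- On `U = {(x,y) : x > 0, y < δ/2}` the skeleton coordinate map is differentiable and
the absolute value of its Jacobian determinant is
`√2(h−δ)((δ−2y)²+4x²)^{1/4} / (√((δ−2y)²+4x²) − δ + 2y)^{3/2}`. -/
theorem skeleton_coords_jacobian (h δ : ℝ) (hδ : 0 < δ) (hh : δ < h) :
    ∀ p : ℝ × ℝ, 0 < p.1 → p.2 < δ / 2 →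
      DifferentiableAt ℝ (skeletonCoords h δ) p ∧
      |LinearMap.det ((fderiv ℝ (skeletonCoords h δ) p).toLinearMap)|
        = Real.sqrt 2 * (h - δ)
            * ((δ - 2 * p.2) ^ 2 + 4 * p.1 ^ 2) ^ ((1 : ℝ) / 4)
            / (Real.sqrt ((δ - 2 * p.2) ^ 2 + 4 * p.1 ^ 2) - δ + 2 * p.2)
                ^ ((3 : ℝ) / 2) := by
  rintro ⟨x, y⟩ hx hy
  dsimp only at hx hy ⊢
  have hx0 : x ≠ 0 := hx.ne'
  set u : ℝ := (δ / 2 - y) / x with hu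
  have hu0 : 0 < u := div_pos (by linarith) hx
  have h1 : (0:ℝ) < u^2 + 1 := by positivity
  set r : ℝ := Real.sqrt (u^2 + 1) with hrdef
  have hr0 : 0 < r := Real.sqrt_pos.mpr h1
  set t : ℝ := u + r with htdef
  have ht0 : 0 < t := by linarith
  have hN : HasFDerivAt (fun q : ℝ × ℝ => δ / 2 - q.2)
      (0 - ContinuousLinearMap.snd ℝ ℝ ℝ) (x, y) :=
    (hasFDerivAt_const (δ/2) (x,y)).sub (hasFDerivAt_snd)
  have hInv0 : HasDerivAt (fun z : ℝ => z⁻¹) (-(x^2)⁻¹) x := hasDerivAt_inv hx0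
  have hInv := hInv0.comp_hasFDerivAt (𝕜 := ℝ) ((x,y) : ℝ × ℝ) hasFDerivAt_fst
  have hU := hN.mul hInv
  have hP : HasDerivAt (fun z : ℝ => z^2 + 1) (2*u^1) u :=
    ((hasDerivAt_pow 2 u).add_const 1).congr_deriv (by push_cast; ring)
  have hU2 := hP.comp_hasFDerivAt (𝕜 := ℝ) ((x, y) : ℝ × ℝ) hU
  have hroot := (Real.hasDerivAt_sqrt h1.ne').comp_hasFDerivAt (𝕜 := ℝ) ((x, y) : ℝ × ℝ) hU2
  have hT := hU.add hroot
  have hg1 := (hasDerivAt_id t).mul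
      ((Real.hasDerivAt_sqrt (by positivity : t^2+1 ≠ 0)).comp t
        (((hasDerivAt_id t).pow 2).add_const 1))
  have hg := ((hg1.add (Real.hasDerivAt_arsinh t)).sub_const (Real.sqrt 2)).sub_const
      (Real.arsinh 1)
  have hσ := (hg.comp_hasFDerivAt (𝕜 := ℝ) ((x, y) : ℝ × ℝ) hT).const_mul ((h - δ) / 4)
  have hφ := ((((hasDerivAt_id t).pow 2).add_const 1).div
      ((hasDerivAt_id t).const_mul 2) (by positivity : 2 * t ≠ 0))
  have hφT := (hφ.comp_hasFDerivAt (𝕜 := ℝ) ((x, y) : ℝ × ℝ) hT).neg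
  have hlin := (hasFDerivAt_fst (𝕜 := ℝ) (p := ((x,y) : ℝ × ℝ))).sub
      (hT.const_mul ((h - δ)/2))
  have hs := hφT.mul hlin
  have hF := HasFDerivAt.prodMk hσ hs
  have hF' : HasFDerivAt (skeletonCoords h δ) _ ((x,y) : ℝ × ℝ) :=
    hF.congr_of_eventuallyEq (Filter.Eventually.of_forall fun q => by
      simp only [skeletonCoords, Function.comp, id, div_eq_mul_inv, Pi.add_apply, Pi.mul_apply,
        Pi.sub_apply, Pi.neg_apply, Pi.inv_apply, Pi.pow_apply, Pi.div_apply])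
  refine ⟨hF'.differentiableAt, ?_⟩
  rw [hF'.fderiv, det_clm_eval]
  simp only [ContinuousLinearMap.prod_apply, ContinuousLinearMap.add_apply,
    ContinuousLinearMap.smul_apply, ContinuousLinearMap.sub_apply,
    ContinuousLinearMap.zero_apply, ContinuousLinearMap.coe_fst',
    ContinuousLinearMap.coe_snd', ContinuousLinearMap.coe_comp',
    Function.comp_apply, smul_eq_mul, ContinuousLinearMap.neg_apply,
    id_eq, pow_one, Nat.cast_ofNat, mul_one, mul_zero, zero_sub, sub_zero,
    zero_mul, add_zero, zero_add, one_mul, neg_zero, mul_neg, neg_neg,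
    Nat.reduceSub, pow_one, Pi.add_apply, Pi.mul_apply, Pi.sub_apply, Pi.neg_apply,
    Pi.div_apply, Pi.pow_apply, Pi.inv_apply]
  have hρ0 : (0:ℝ) < Real.sqrt (t^2+1) := Real.sqrt_pos.mpr (by positivity)
  have hρ2 : (Real.sqrt (t^2+1))^2 = t^2+1 := Real.sq_sqrt (by positivity)
  have hr2 : r^2 = u^2+1 := Real.sq_sqrt (by positivity)
  have e1 : (δ/2 - y) * x⁻¹ = u := by rw [hu]; ring
  have e2 : (δ/2 - y) * (x^2)⁻¹ = u * x⁻¹ := by rw [hu]; ring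
  rw [e1, e2, ← hrdef, ← htdef]
  rw [show (1:ℝ) + t^2 = t^2+1 from add_comm _ _]
  set ρ : ℝ := Real.sqrt (t^2+1) with hρdef
  have gG : ρ + t * (1/(2*ρ) * (2*t)) + ρ⁻¹ = 2*ρ := by
    have hinv : ρ⁻¹ * ρ = 1 := inv_mul_cancel₀ hρ0.ne'
    apply mul_right_cancel₀ hρ0.ne'
    linear_combination (t^2 + 1) * hinv - hρ2
  have gdT2 : -x⁻¹ + -(1/(2*r)*(2*u*x⁻¹)) = -(t/(r*x)) := by
    rw [htdef]; field_simp; ring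
  have gdT1 : -(u*x⁻¹) + -(1/(2*r)*(2*u*(u*x⁻¹))) = -(t*u/(r*x)) := by
    rw [htdef]; field_simp; ring
  rw [gG, gdT2, gdT1]
  rw [← skeleton_alg h δ x y hh hx hy, ← hu, ← hrdef, ← htdef, ← hρdef]
  rw [abs_eq (by
    apply div_nonneg _ hx.le
    exact mul_nonneg (mul_nonneg (by linarith) ht0.le) hρ0.le)]
  right
  have hrt : t^2+1 = 2*r*t := by rw [htdef]; linear_combination -hr2
  have hrw : -((h - δ)/2 * t * ρ / x) = -((h-δ) * ρ * (t^2+1)/(4*(r*x))) := by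
    rw [hrt]
    field_simp
    ring
  rw [hrw]
  field_simp
  ring
end
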